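/- Let f: ℝⁿ → ℝ be continuously differentiable and let {x^k} be generated by a linesearch method x^{k+1} = x^k + t_k d^k with t_k ≥ 0. Assume that: (a) {d^k} is gradient associated with {x^k}; (b) 0 is an accumulation point of {d^k}; (c) ∑_{k=1}^∞ t_k ‖d^k‖² < ∞. Then every accumulation point x̄ of {x^k} is a stationary point of f, i.e., ∇f(x̄) = 0. -/

import Mathlib

open Filter

/-- Theorem 3.3 (main part): for a linesearch method `x^{k+1} = x^k + t_k d^k` with a
gradient associated direction sequence, `0` an accumulation point of `{d^k}`, and
`∑ t_k ‖d^k‖² < ∞`, every accumulation point of `{x^k}` is a stationary point of `f`. -/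
theorem stmt2 {n : ℕ} (f : EuclideanSpace ℝ (Fin n) → ℝ) (hf : ContDiff ℝ 1 f)
    (x d : ℕ → EuclideanSpace ℝ (Fin n)) (t : ℕ → ℝ)
    (ht : ∀ k, 0 ≤ t k)
    (hstep : ∀ k, x (k + 1) = x k + t k • d k)
    (hga : ∀ φ : ℕ → ℕ, StrictMono φ → Tendsto (d ∘ φ) atTop (nhds 0) →
      Tendsto (fun k => gradient f (x (φ k))) atTop (nhds 0))
    (hd0 : ∃ φ : ℕ → ℕ, StrictMono φ ∧ Tendsto (d ∘ φ) atTop (nhds 0))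
    (hsum : Summable (fun k => t k * ‖d k‖ ^ 2))
    (xbar : EuclideanSpace ℝ (Fin n))
    (hacc : ∃ φ : ℕ → ℕ, StrictMono φ ∧ Tendsto (x ∘ φ) atTop (nhds xbar)) :
    gradient f xbar = 0 := by
  by_contra hne
  set g : ℕ → ℝ := fun k => t k * ‖d k‖ ^ 2 with hg_def
  have hg0 : ∀ k, 0 ≤ g k := fun k => mul_nonneg (ht k) (sq_nonneg _)
  have hc : 0 < ‖gradient f xbar‖ := norm_pos_iff.mpr hne
  set c : ℝ := ‖gradient f xbar‖ with hc_def
  -- continuity of the gradient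
  have hgradcont : Continuous (gradient f) := by
    have h1 : Continuous (fderiv ℝ f) := hf.continuous_fderiv one_ne_zero
    exact ((InnerProductSpace.toDual ℝ (EuclideanSpace ℝ (Fin n))).symm.continuous).comp h1
  -- a ball around xbar where the gradient norm is at least c/2
  have hU : IsOpen {y : EuclideanSpace ℝ (Fin n) | c / 2 < ‖gradient f y‖} :=
    isOpen_lt continuous_const (continuous_norm.comp hgradcont)
  have hxU : xbar ∈ {y : EuclideanSpace ℝ (Fin n) | c / 2 < ‖gradient f y‖} := by
    simp only [Set.mem_setOf_eq]; linarith
  obtain ⟨r, hr, hrball⟩ := Metric.isOpen_iff.mp hU xbar hxU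
  have hrball' : ∀ y, dist y xbar < r → c / 2 < ‖gradient f y‖ := fun y hy => hrball hy
  -- key claim: eventually, if x k is in the ball then ‖d k‖ is bounded below
  have hkey : ∃ ε > 0, ∃ N : ℕ, ∀ k ≥ N, dist (x k) xbar < r → ε ≤ ‖d k‖ := by
    by_contra hcon
    push_neg at hcon
    have hfreq : ∀ m : ℕ, ∃ᶠ k in atTop, dist (x k) xbar < r ∧ ‖d k‖ < 1 / (m + 1) := by
      intro m
      rw [frequently_atTop]
      intro N
      obtain ⟨k, hkN, hkball, hkd⟩ := hcon (1 / (m + 1)) (by positivity) N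
      exact ⟨k, hkN, hkball, hkd⟩
    obtain ⟨φ, hφm, hφP⟩ := extraction_forall_of_frequently hfreq
    have hdφ : Tendsto (d ∘ φ) atTop (nhds 0) := by
      rw [tendsto_zero_iff_norm_tendsto_zero]
      apply squeeze_zero (fun m => norm_nonneg _) (fun m => (hφP m).2.le)
      exact tendsto_one_div_add_atTop_nhds_zero_nat
    have hgrad := hga φ hφm hdφ
    have hgradnorm : Tendsto (fun m => ‖gradient f (x (φ m))‖) atTop (nhds 0) := by
      simpa using (tendsto_zero_iff_norm_tendsto_zero.mp hgrad)
    have hge : (0:ℝ) ≥ c / 2 :=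
      ge_of_tendsto hgradnorm (Eventually.of_forall fun m => (hrball' _ (hφP m).1).le)
    linarith
  obtain ⟨ε, hε, N, hN⟩ := hkey
  -- tail of the series is small
  set δ : ℝ := ε * r / 4 with hδ_def
  have hδ : 0 < δ := by positivity
  set L : ℝ := ∑' k, g k with hL_def
  have hLtendsto : Tendsto (fun m => ∑ i ∈ Finset.range m, g i) atTop (nhds L) :=
    hsum.hasSum.tendsto_sum_nat
  have hMex : ∀ᶠ m in atTop, L - δ < ∑ i ∈ Finset.range m, g i :=
    hLtendsto.eventually (eventually_gt_nhds (by linarith))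
  obtain ⟨M, hM⟩ := hMex.exists
  have htail : ∀ K, M ≤ K → ∑ j ∈ Finset.Ico M K, g j < δ := by
    intro K hK
    have h1 : ∑ j ∈ Finset.Ico M K, g j = ∑ i ∈ Finset.range K, g i - ∑ i ∈ Finset.range M, g i := by
      rw [Finset.sum_Ico_eq_sub _ hK]
    have h2 : ∑ i ∈ Finset.range K, g i ≤ L := Summable.sum_le_tsum _ (fun i _ => hg0 i) hsum
    rw [h1]; linarith
  -- choose k0 close to xbar with k0 ≥ max M N
  obtain ⟨φ, hφm, hφt⟩ := hacc
  have hφev : ∀ᶠ j in atTop, dist ((x ∘ φ) j) xbar < r / 2 := by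
    have : ∀ᶠ y in nhds xbar, dist y xbar < r / 2 :=
      Metric.ball_mem_nhds xbar (by linarith)
    exact hφt.eventually this
  obtain ⟨J, hJ⟩ := eventually_atTop.mp hφev
  set j0 : ℕ := max J (max M N) with hj0_def
  set k0 : ℕ := φ j0 with hk0_def
  have hk0j : j0 ≤ k0 := hφm.le_apply
  have hk0M : M ≤ k0 := le_trans (le_trans (le_max_left M N) (le_max_right J _)) hk0j
  have hk0N : N ≤ k0 := le_trans (le_trans (le_max_right M N) (le_max_right J _)) hk0j
  have hk0close : dist (x k0) xbar < r / 2 := hJ j0 (le_max_left _ _)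
  -- the iterates never leave the ball of radius 3r/4 after k0
  have hstay : ∀ m : ℕ, dist (x (k0 + m)) xbar < r / 2 + (1 / ε) * ∑ j ∈ Finset.Ico k0 (k0 + m), g j := by
    intro m
    induction m with
    | zero => simpa using hk0close
    | succ m ih =>
      have hsumbound : ∑ j ∈ Finset.Ico k0 (k0 + m), g j < δ := by
        calc ∑ j ∈ Finset.Ico k0 (k0 + m), g j
            ≤ ∑ j ∈ Finset.Ico M (k0 + m), g j := by
              apply Finset.sum_le_sum_of_subset_of_nonneg
              · exact Finset.Ico_subset_Ico hk0M le_rfl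
              · exact fun i _ _ => hg0 i
          _ < δ := htail _ (le_trans hk0M (Nat.le_add_right _ _))
      have hin : dist (x (k0 + m)) xbar < r := by
        have : (1 / ε) * ∑ j ∈ Finset.Ico k0 (k0 + m), g j ≤ (1 / ε) * δ := by
          apply mul_le_mul_of_nonneg_left hsumbound.le (by positivity)
        have hδε : (1 / ε) * δ = r / 4 := by rw [hδ_def]; field_simp
        linarith [ih]
      have hdlow : ε ≤ ‖d (k0 + m)‖ := hN _ (le_trans hk0N (Nat.le_add_right _ _)) hin
      have hstepdist : dist (x (k0 + m + 1)) (x (k0 + m)) ≤ (1 / ε) * g (k0 + m) := by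
        rw [hstep (k0 + m), dist_eq_norm]
        simp only [add_sub_cancel_left, norm_smul, Real.norm_eq_abs, abs_of_nonneg (ht _),
          hg_def]
        have h1 : t (k0 + m) * ‖d (k0 + m)‖ * ε ≤ t (k0 + m) * ‖d (k0 + m)‖ ^ 2 := by
          nlinarith [mul_nonneg (ht (k0 + m)) (norm_nonneg (d (k0 + m))), hdlow,
            mul_nonneg (sub_nonneg.mpr hdlow) (mul_nonneg (ht (k0 + m)) (norm_nonneg (d (k0 + m))))]
        have h2 : t (k0 + m) * ‖d (k0 + m)‖ ≤ (t (k0 + m) * ‖d (k0 + m)‖ ^ 2) / ε :=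
          (le_div_iff₀ hε).mpr h1
        rw [one_div, inv_mul_eq_div]
        exact h2
      have hsumsucc : ∑ j ∈ Finset.Ico k0 (k0 + m + 1), g j
          = ∑ j ∈ Finset.Ico k0 (k0 + m), g j + g (k0 + m) :=
        Finset.sum_Ico_succ_top (Nat.le_add_right _ _) _
      show dist (x (k0 + m + 1)) xbar < r / 2 + (1 / ε) * ∑ j ∈ Finset.Ico k0 (k0 + m + 1), g j
      calc dist (x (k0 + m + 1)) xbar
          ≤ dist (x (k0 + m + 1)) (x (k0 + m)) + dist (x (k0 + m)) xbar := dist_triangle _ _ _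
        _ < (1 / ε) * g (k0 + m) + (r / 2 + (1 / ε) * ∑ j ∈ Finset.Ico k0 (k0 + m), g j) := by
            linarith [hstepdist, ih]
        _ = r / 2 + (1 / ε) * ∑ j ∈ Finset.Ico k0 (k0 + m + 1), g j := by
            rw [hsumsucc]; ring
  have hstay' : ∀ k, k0 ≤ k → dist (x k) xbar < r := by
    intro k hk
    obtain ⟨m, rfl⟩ := Nat.exists_eq_add_of_le hk
    have h1 := hstay m
    have hsumbound : ∑ j ∈ Finset.Ico k0 (k0 + m), g j < δ := by
      calc ∑ j ∈ Finset.Ico k0 (k0 + m), g j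
          ≤ ∑ j ∈ Finset.Ico M (k0 + m), g j := by
            apply Finset.sum_le_sum_of_subset_of_nonneg
            · exact Finset.Ico_subset_Ico hk0M le_rfl
            · exact fun i _ _ => hg0 i
        _ < δ := htail _ (le_trans hk0M (Nat.le_add_right _ _))
    have h2 : (1 / ε) * ∑ j ∈ Finset.Ico k0 (k0 + m), g j ≤ (1 / ε) * δ :=
      mul_le_mul_of_nonneg_left hsumbound.le (by positivity)
    have hδε : (1 / ε) * δ = r / 4 := by rw [hδ_def]; field_simp
    linarith
  -- contradiction with 0 being an accumulation point of d
  obtain ⟨ψ, hψm, hψt⟩ := hd0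
  have hψev : ∀ᶠ j in atTop, ‖(d ∘ ψ) j‖ < ε := by
    have h1 : Tendsto (fun j => ‖(d ∘ ψ) j‖) atTop (nhds 0) :=
      tendsto_zero_iff_norm_tendsto_zero.mp hψt
    exact h1.eventually (eventually_lt_nhds hε)
  obtain ⟨J', hJ'⟩ := eventually_atTop.mp hψev
  set j1 : ℕ := max J' k0 with hj1_def
  have hψj1 : k0 ≤ ψ j1 := le_trans (le_max_right J' k0) hψm.le_apply
  have hball : dist (x (ψ j1)) xbar < r := hstay' _ hψj1
  have hlow : ε ≤ ‖d (ψ j1)‖ := hN _ (le_trans hk0N hψj1) hball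
  have hhigh : ‖d (ψ j1)‖ < ε := hJ' j1 (le_max_left _ _)
  linarith
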